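/- Let X ⊆ ℝ^d be a nonempty closed convex set with metric projection P_X, and let f_1, …, f_n : ℝ^d → ℝ be differentiable, μ-strongly convex and L-smooth with 0 < μ ≤ L; set f = (1/n)Σ_l f_l and let x* be the unique minimizer of f over X. Let φ, φ', π ∈ ℝⁿ be positive stochastic vectors, let R be a row-stochastic n×n matrix with φ'ᵀR = φᵀ, let 0 < η < 1/(nL), λ ∈ (0, 1], and let x_1, …, x_n, y_1, …, y_n ∈ ℝ^d satisfy Σ_l y_l = Σ_l ∇f_l(x_l). Define z_i = (1 − λ)x_i + λ P_X(x_i − η y_i) and x⁺_i = Σ_j R_{ij} z_j, and assume the averaging contraction D(x⁺, φ') ≤ σ·D(z, φ) holds for some σ ∈ (0, 1). Then D(x⁺, φ') ≤ 2λσ·q_π(η, 1)·√(Σ_i φ_i ‖x_i − x*‖²) + (σ·q_π(η, λ) + 2ηλσL·√(n/min_i φ_i))·D(x, φ) + 2ηλσ·S(y, π), where q_π(η, λ) = max_i (1 − λ·η n π_i·μ). -/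

import Mathlib

open Finset RealInnerProductSpace

section PPPHelpers
open intervalIntegral

section calculus
variable {E : Type*} [NormedAddCommGroup E] [InnerProductSpace ℝ E] [CompleteSpace E]

lemma line_hasDerivAt (f : E → ℝ) (hf : Differentiable ℝ f) (a d : E) (t : ℝ) :
    HasDerivAt (fun s : ℝ => f (a + s • d)) ⟪gradient f (a + t • d), d⟫ t := by
  have h1 : HasDerivAt (fun s : ℝ => a + s • d) d t := by
    simpa using ((hasDerivAt_id t).smul_const d).const_add a
  have h2 : HasFDerivAt f (InnerProductSpace.toDual ℝ E (gradient f (a + t • d))) (a + t • d) := by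
    rw [← hasGradientAt_iff_hasFDerivAt]
    exact (hf _).hasGradientAt
  have h3 : HasDerivAt (fun s : ℝ => f (a + s • d))
      ((InnerProductSpace.toDual ℝ E (gradient f (a + t • d))) d) t := h2.comp_hasDerivAt t h1
  simpa using h3

lemma grad_continuous (f : E → ℝ) (L : ℝ) (hL : 0 ≤ L)
    (hsmooth : ∀ u v, ‖gradient f u - gradient f v‖ ≤ L * ‖u - v‖) :
    Continuous (fun u => gradient f u) := by
  apply (LipschitzWith.of_dist_le_mul (K := L.toNNReal) ?_).continuous
  intro u v
  rw [Real.coe_toNNReal _ hL]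
  simpa [dist_eq_norm] using hsmooth u v

lemma breg (f : E → ℝ) (hf : Differentiable ℝ f) (μ L : ℝ) (hμ0 : 0 ≤ μ) (hL : 0 ≤ L)
    (hstrong : ∀ u v, μ * ‖u - v‖ ^ 2 ≤ ⟪gradient f u - gradient f v, u - v⟫)
    (hsmooth : ∀ u v, ‖gradient f u - gradient f v‖ ≤ L * ‖u - v‖) (a b : E) :
    μ / 2 * ‖b - a‖ ^ 2 ≤ f b - f a - ⟪gradient f a, b - a⟫ ∧
      f b - f a - ⟪gradient f a, b - a⟫ ≤ L / 2 * ‖b - a‖ ^ 2 := by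
  set d := b - a with hd
  have hcont : Continuous (fun t : ℝ => ⟪gradient f (a + t • d), d⟫) := by
    exact (Continuous.inner ((grad_continuous f L hL hsmooth).comp (by continuity)) continuous_const)
  have hint : ∫ t in (0:ℝ)..1, ⟪gradient f (a + t • d), d⟫ = f b - f a := by
    rw [integral_eq_sub_of_hasDerivAt (fun t _ => line_hasDerivAt f hf a d t)
      (hcont.intervalIntegrable 0 1)]
    simp [hd]
  have key : ∀ t ∈ Set.Icc (0:ℝ) 1,
      μ * t * ‖d‖ ^ 2 ≤ ⟪gradient f (a + t • d) - gradient f a, d⟫ ∧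
      ⟪gradient f (a + t • d) - gradient f a, d⟫ ≤ L * t * ‖d‖ ^ 2 := by
    intro t ht
    have ht0 : 0 ≤ t := ht.1
    have hsub : (a + t • d) - a = t • d := by abel
    constructor
    · rcases eq_or_lt_of_le ht0 with h | h
      · simp [← h]
      · have := hstrong (a + t • d) a
        rw [hsub] at this
        rw [real_inner_smul_right, norm_smul] at this
        have : μ * (t^2 * ‖d‖^2) ≤ t * ⟪gradient f (a + t • d) - gradient f a, d⟫ := by
          calc μ * (t^2 * ‖d‖^2) = μ * (‖t‖ * ‖d‖)^2 := by
                rw [mul_pow, Real.norm_eq_abs, sq_abs]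
              _ ≤ _ := this
        nlinarith
    · calc ⟪gradient f (a + t • d) - gradient f a, d⟫
          ≤ ‖gradient f (a + t • d) - gradient f a‖ * ‖d‖ := real_inner_le_norm _ _
        _ ≤ (L * ‖t • d‖) * ‖d‖ := by
            have := hsmooth (a + t • d) a; rw [hsub] at this
            exact mul_le_mul_of_nonneg_right this (norm_nonneg _)
        _ = L * t * ‖d‖ ^ 2 := by
            rw [norm_smul, Real.norm_eq_abs, abs_of_nonneg ht0]; ring
  have hii : IntervalIntegrable (fun t : ℝ => ⟪gradient f (a + t • d) - gradient f a, d⟫)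
      MeasureTheory.volume 0 1 := by
    apply Continuous.intervalIntegrable
    exact (Continuous.inner (((grad_continuous f L hL hsmooth).comp (by continuity)).sub
      continuous_const) continuous_const)
  have hsplit : ∫ t in (0:ℝ)..1, ⟪gradient f (a + t • d) - gradient f a, d⟫
      = f b - f a - ⟪gradient f a, d⟫ := by
    have : ∀ t : ℝ, ⟪gradient f (a + t • d) - gradient f a, d⟫
        = ⟪gradient f (a + t • d), d⟫ - ⟪gradient f a, d⟫ := by
      intro t; rw [inner_sub_left]
    simp only [this]
    rw [intervalIntegral.integral_sub (hcont.intervalIntegrable 0 1)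
      (intervalIntegrable_const), hint]
    simp
  constructor
  · have hlow : ∫ t in (0:ℝ)..1, μ * t * ‖d‖^2
        ≤ ∫ t in (0:ℝ)..1, ⟪gradient f (a + t • d) - gradient f a, d⟫ := by
      apply integral_mono_on zero_le_one ?_ hii (fun t ht => (key t ht).1)
      exact (Continuous.intervalIntegrable (by continuity) _ _)
    have : ∫ t in (0:ℝ)..1, μ * t * ‖d‖^2 = μ / 2 * ‖d‖^2 := by
      have he : (fun t : ℝ => μ * t * ‖d‖^2) = fun t : ℝ => (μ * ‖d‖^2) * t := by
        ext t; ring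
      rw [he, integral_const_mul, integral_id]; ring
    rw [this, hsplit] at hlow
    linarith [hlow]
  · have hup : ∫ t in (0:ℝ)..1, ⟪gradient f (a + t • d) - gradient f a, d⟫
        ≤ ∫ t in (0:ℝ)..1, L * t * ‖d‖^2 := by
      apply integral_mono_on zero_le_one hii ?_ (fun t ht => (key t ht).2)
      exact (Continuous.intervalIntegrable (by continuity) _ _)
    have : ∫ t in (0:ℝ)..1, L * t * ‖d‖^2 = L / 2 * ‖d‖^2 := by
      have he : (fun t : ℝ => L * t * ‖d‖^2) = fun t : ℝ => (L * ‖d‖^2) * t := by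
        ext t; ring
      rw [he, integral_const_mul, integral_id]; ring
    rw [this, hsplit] at hup
    linarith [hup]

omit [CompleteSpace E] in
lemma coco_half (c : ℝ) (hc : 0 < c) (h : E → ℝ) (G : E → E)
    (hA : ∀ x y : E, h x + ⟪G x, y - x⟫ ≤ h y)
    (hB : ∀ x y : E, h y ≤ h x + ⟪G x, y - x⟫ + c / 2 * ‖y - x‖ ^ 2) :
    ∀ x y : E, ‖G y - G x‖ ^ 2 ≤ c * ⟪G y - G x, y - x⟫ := by
  have half : ∀ x y : E, h x + ⟪G x, y - x⟫ + 1 / (2 * c) * ‖G y - G x‖ ^ 2 ≤ h y := by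
    intro x y
    set D := G y - G x with hD
    set z := y - c⁻¹ • D with hz
    have h1 := hA x z
    have h2 := hB y z
    have e1 : z - x = (y - x) - c⁻¹ • D := by rw [hz]; abel
    have e2 : z - y = -(c⁻¹ • D) := by rw [hz]; abel
    have i1 : ⟪G x, z - x⟫ = ⟪G x, y - x⟫ - c⁻¹ * ⟪G x, D⟫ := by
      rw [e1, inner_sub_right, real_inner_smul_right]
    have i2 : ⟪G y, z - y⟫ = -(c⁻¹ * ⟪G y, D⟫) := by
      rw [e2, inner_neg_right, real_inner_smul_right]
    have i3 : ‖z - y‖ ^ 2 = c⁻¹ ^ 2 * ‖D‖ ^ 2 := by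
      rw [e2, norm_neg, norm_smul, mul_pow, Real.norm_eq_abs, sq_abs]
    have i4 : ⟪G y, D⟫ - ⟪G x, D⟫ = ‖D‖ ^ 2 := by
      rw [← inner_sub_left, ← hD, real_inner_self_eq_norm_sq]
    rw [i1] at h1
    rw [i2, i3] at h2
    have hc' : c ≠ 0 := ne_of_gt hc
    have : h x + ⟪G x, y - x⟫ - c⁻¹ * ⟪G x, D⟫ ≤ h y - c⁻¹ * ⟪G y, D⟫ + c / 2 * (c⁻¹ ^ 2 * ‖D‖ ^ 2) := by
      have := le_trans h1 h2; linarith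
    have hfe : c / 2 * (c⁻¹ ^ 2 * ‖D‖ ^ 2) = 1 / (2 * c) * ‖D‖ ^ 2 := by
      field_simp
    have hci : c⁻¹ * ⟪G y, D⟫ - c⁻¹ * ⟪G x, D⟫ = c⁻¹ * ‖D‖ ^ 2 := by
      rw [← mul_sub, i4]
    have hce : c⁻¹ * ‖D‖ ^ 2 - 1 / (2 * c) * ‖D‖ ^ 2 = 1 / (2 * c) * ‖D‖ ^ 2 := by
      field_simp; ring
    linarith
  intro x y
  have h1 := half x y
  have h2 := half y x
  have e : ⟪G x, y - x⟫ + ⟪G y, x - y⟫ = -⟪G y - G x, y - x⟫ := by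
    have : x - y = -(y - x) := by abel
    rw [this, inner_neg_right, inner_sub_left]; ring
  have en : ‖G x - G y‖ = ‖G y - G x‖ := by rw [← norm_neg]; congr 1; abel
  rw [en] at h2
  have hc2 : 0 < 2 * c := by linarith
  have : 2 * (1 / (2 * c)) * ‖G y - G x‖ ^ 2 ≤ ⟪G y - G x, y - x⟫ := by linarith
  calc ‖G y - G x‖ ^ 2 = c * (2 * (1 / (2 * c)) * ‖G y - G x‖ ^ 2) := by
        field_simp
    _ ≤ c * ⟪G y - G x, y - x⟫ := by
        exact mul_le_mul_of_nonneg_left this (le_of_lt hc)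

lemma strong_coco (f : E → ℝ) (hf : Differentiable ℝ f) (μ L : ℝ) (hμ : 0 < μ) (hμL : μ ≤ L)
    (hstrong : ∀ u v, μ * ‖u - v‖ ^ 2 ≤ ⟪gradient f u - gradient f v, u - v⟫)
    (hsmooth : ∀ u v, ‖gradient f u - gradient f v‖ ≤ L * ‖u - v‖)
    (a b : E) :
    ‖gradient f b - gradient f a‖ ^ 2 + μ * L * ‖b - a‖ ^ 2
      ≤ (L + μ) * ⟪gradient f b - gradient f a, b - a⟫ := by
  have hbreg := breg f hf μ L hμ.le (by linarith) hstrong hsmooth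
  set Δ := gradient f b - gradient f a with hΔ
  set w := b - a with hw
  have hs := hstrong b a
  have hsm := hsmooth b a
  rcases eq_or_lt_of_le hμL with hEq | hLt
  · subst hEq
    nlinarith [norm_nonneg Δ, norm_nonneg w]
  · set c := L - μ with hc
    have hc0 : 0 < c := by simp [hc]; linarith
    set G : E → E := fun v => gradient f v - μ • v with hG
    have key : ∀ x y : E, (f y - μ / 2 * ‖y‖ ^ 2) - (f x - μ / 2 * ‖x‖ ^ 2) - ⟪G x, y - x⟫
        = (f y - f x - ⟪gradient f x, y - x⟫) - μ / 2 * ‖y - x‖ ^ 2 := by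
      intro x y
      have e1 : ⟪G x, y - x⟫ = ⟪gradient f x, y - x⟫ - μ * ⟪x, y - x⟫ := by
        rw [hG]; simp only []
        rw [inner_sub_left, real_inner_smul_left]
      have e2 : ‖y‖ ^ 2 = ‖x‖ ^ 2 + 2 * ⟪x, y - x⟫ + ‖y - x‖ ^ 2 := by
        have := norm_add_sq_real x (y - x)
        simpa using this
      rw [e1, e2]; ring
    have hA : ∀ x y : E, (fun v => f v - μ / 2 * ‖v‖ ^ 2) x + ⟪G x, y - x⟫
        ≤ (fun v => f v - μ / 2 * ‖v‖ ^ 2) y := by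
      intro x y
      have := (hbreg x y).1
      have k := key x y
      simp only [] at k ⊢
      linarith
    have hB : ∀ x y : E, (fun v => f v - μ / 2 * ‖v‖ ^ 2) y
        ≤ (fun v => f v - μ / 2 * ‖v‖ ^ 2) x + ⟪G x, y - x⟫ + c / 2 * ‖y - x‖ ^ 2 := by
      intro x y
      have := (hbreg x y).2
      have k := key x y
      simp only [] at k ⊢
      rw [hc]
      linarith
    have coco := coco_half c hc0 _ G hA hB a b
    have eD : G b - G a = Δ - μ • w := by
      rw [hG, hΔ, hw]; simp only []
      module
    rw [eD] at coco
    have e1 : ‖Δ - μ • w‖ ^ 2 = ‖Δ‖ ^ 2 - 2 * μ * ⟪Δ, w⟫ + μ ^ 2 * ‖w‖ ^ 2 := by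
      rw [norm_sub_sq_real, real_inner_smul_right, norm_smul, mul_pow, Real.norm_eq_abs, sq_abs]
      ring
    have e2 : ⟪Δ - μ • w, b - a⟫ = ⟪Δ, w⟫ - μ * ‖w‖ ^ 2 := by
      rw [inner_sub_left, real_inner_smul_left, ← hw, real_inner_self_eq_norm_sq]
    rw [e1, e2, hc] at coco
    nlinarith [coco]
end calculus

section mink
variable {ι : Type*} [Fintype ι]

lemma mink3 (c A B C r : ι → ℝ) (hc : ∀ i, 0 ≤ c i) (hr : ∀ i, 0 ≤ r i)
    (hb : ∀ i, r i ≤ A i + B i + C i) :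
    Real.sqrt (∑ i, c i * r i ^ 2)
      ≤ Real.sqrt (∑ i, c i * A i ^ 2) + Real.sqrt (∑ i, c i * B i ^ 2)
        + Real.sqrt (∑ i, c i * C i ^ 2) := by
  set uf : (ι → ℝ) → EuclideanSpace ℝ ι := fun g => WithLp.toLp 2 (fun i => Real.sqrt (c i) * g i) with huf
  have hnorm : ∀ (g : ι → ℝ), ‖uf g‖ = Real.sqrt (∑ i, c i * g i ^ 2) := by
    intro g
    rw [EuclideanSpace.norm_eq]
    congr 1
    apply Finset.sum_congr rfl
    intro i _
    have : uf g i = Real.sqrt (c i) * g i := rfl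
    rw [this, Real.norm_eq_abs, sq_abs, mul_pow, Real.sq_sqrt (hc i)]
  have h1 : ∑ i, c i * r i ^ 2 ≤ ‖uf A + uf B + uf C‖ ^ 2 := by
    have he : ‖uf A + uf B + uf C‖ ^ 2 = ∑ i, c i * (A i + B i + C i) ^ 2 := by
      rw [EuclideanSpace.norm_eq, Real.sq_sqrt (by positivity)]
      apply Finset.sum_congr rfl
      intro i _
      have : (uf A + uf B + uf C) i = Real.sqrt (c i) * (A i + B i + C i) := by
        simp only [huf, PiLp.add_apply, PiLp.toLp_apply]; ring
      rw [this, Real.norm_eq_abs, sq_abs, mul_pow, Real.sq_sqrt (hc i)]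
    rw [he]
    apply Finset.sum_le_sum
    intro i _
    have h2 : r i ^ 2 ≤ (A i + B i + C i) ^ 2 := pow_le_pow_left₀ (hr i) (hb i) 2
    exact mul_le_mul_of_nonneg_left h2 (hc i)
  calc Real.sqrt (∑ i, c i * r i ^ 2) ≤ Real.sqrt (‖uf A + uf B + uf C‖ ^ 2) :=
        Real.sqrt_le_sqrt h1
    _ = ‖uf A + uf B + uf C‖ := Real.sqrt_sq (norm_nonneg _)
    _ ≤ ‖uf A‖ + ‖uf B‖ + ‖uf C‖ := norm_add₃_le
    _ = _ := by rw [hnorm A, hnorm B, hnorm C]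

lemma mink2 (c A B r : ι → ℝ) (hc : ∀ i, 0 ≤ c i) (hr : ∀ i, 0 ≤ r i)
    (hb : ∀ i, r i ≤ A i + B i) :
    Real.sqrt (∑ i, c i * r i ^ 2)
      ≤ Real.sqrt (∑ i, c i * A i ^ 2) + Real.sqrt (∑ i, c i * B i ^ 2) := by
  have := mink3 c A B (fun _ => 0) r hc hr (by intro i; simpa using hb i)
  simpa using this

lemma sqrt_sum_le_const_mul (s : ι → ℝ) (t K : ℝ) (hK : 0 ≤ K)
    (h : ∑ i, s i ≤ K ^ 2 * t) :
    Real.sqrt (∑ i, s i) ≤ K * Real.sqrt t := by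
  calc Real.sqrt (∑ i, s i) ≤ Real.sqrt (K ^ 2 * t) := Real.sqrt_le_sqrt h
    _ = K * Real.sqrt t := by
        rw [Real.sqrt_mul (by positivity), Real.sqrt_sq hK]
end mink

lemma nonneg_of_forall_le_lin (s K : ℝ) (hK : 0 ≤ K)
    (h : ∀ t : ℝ, 0 < t → t ≤ 1 → -s ≤ K * t) : 0 ≤ s := by
  by_contra hs
  push_neg at hs
  set ε := -s with hε
  have hε0 : 0 < ε := by simp [hε]; linarith
  have ht0 : 0 < ε / (K + 1) := by positivity
  have h1 : min 1 (ε / (K + 1)) ≤ 1 := min_le_left _ _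
  have h2 : 0 < min 1 (ε / (K + 1)) := lt_min one_pos ht0
  have := h _ h2 h1
  have h3 : K * min 1 (ε / (K + 1)) ≤ K * (ε / (K + 1)) :=
    mul_le_mul_of_nonneg_left (min_le_right _ _) hK
  have h4 : K * (ε / (K + 1)) < ε := by
    rw [div_eq_inv_mul, ← mul_assoc]
    have hK1 : 0 < K + 1 := by linarith
    have : K * (K + 1)⁻¹ < 1 := by
      rw [mul_inv_lt_iff₀ hK1]; linarith
    nlinarith
  linarith

section step
variable {E : Type*} [NormedAddCommGroup E] [InnerProductSpace ℝ E]

lemma step_contract (α nn μ L Q : ℝ) (w S : E)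
    (hα : 0 ≤ α) (hαn : α * nn * (L + μ) ≤ 2) (hn : 0 ≤ nn)
    (h1 : Q + nn * μ * L * ‖w‖ ^ 2 ≤ (L + μ) * ⟪S, w⟫)
    (h2 : ‖S‖ ^ 2 ≤ nn * Q)
    (h3 : nn * μ * ‖w‖ ^ 2 ≤ ⟪S, w⟫)
    (hfac : 0 ≤ 1 - α * nn * μ) :
    ‖w - α • S‖ ≤ (1 - α * nn * μ) * ‖w‖ := by
  have hsq : ‖w - α • S‖ ^ 2 ≤ ((1 - α * nn * μ) * ‖w‖) ^ 2 := by
    have e1 : ‖w - α • S‖ ^ 2 = ‖w‖ ^ 2 - 2 * α * ⟪S, w⟫ + α ^ 2 * ‖S‖ ^ 2 := by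
      rw [norm_sub_sq_real, real_inner_smul_right, norm_smul, mul_pow, Real.norm_eq_abs,
        sq_abs, real_inner_comm w S]
      ring
    rw [e1]
    have h2' : α ^ 2 * ‖S‖ ^ 2 ≤ α ^ 2 * (nn * Q) := by nlinarith [sq_nonneg α]
    have h1' : α ^ 2 * nn * Q ≤ α ^ 2 * nn * ((L + μ) * ⟪S, w⟫ - nn * μ * L * ‖w‖ ^ 2) := by
      have : Q ≤ (L + μ) * ⟪S, w⟫ - nn * μ * L * ‖w‖ ^ 2 := by linarith
      nlinarith [sq_nonneg α, mul_nonneg (sq_nonneg α) hn]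
    have h3' : 0 ≤ (α * (2 - α * nn * (L + μ))) * (⟪S, w⟫ - nn * μ * ‖w‖ ^ 2) := by
      apply mul_nonneg
      · apply mul_nonneg hα; nlinarith
      · linarith
    nlinarith [h2', h1', h3']
  have := Real.sqrt_le_sqrt hsq
  rwa [Real.sqrt_sq (norm_nonneg _), Real.sqrt_sq (by positivity)] at this
end step

end PPPHelpers

/-- Consensus error `D(u, a) = √(Σ_i Σ_j a_i a_j ‖u_i − u_j‖²)`. -/
noncomputable def Derr {n d : ℕ} (a : Fin n → ℝ) (u : Fin n → EuclideanSpace ℝ (Fin d)) : ℝ :=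
  Real.sqrt (∑ i, ∑ j, a i * a j * ‖u i - u j‖ ^ 2)

/-- Gradient-tracking error `S(y, a) = √(Σ_i a_i ‖y_i/a_i − Σ_l y_l‖²)`. -/
noncomputable def Serr {n d : ℕ} (a : Fin n → ℝ) (y : Fin n → EuclideanSpace ℝ (Fin d)) : ℝ :=
  Real.sqrt (∑ i, a i * ‖(a i)⁻¹ • y i - (∑ l, y l)‖ ^ 2)

/-- Minimum entry of a vector over `Fin n`, `n ≠ 0`. -/
noncomputable def fmin {n : ℕ} [NeZero n] (a : Fin n → ℝ) : ℝ :=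
  Finset.univ.inf' Finset.univ_nonempty a

/-- `q_π(η, λ) = max_i (1 − λ·ηnπ_i·μ)`. -/
noncomputable def qmax {n : ℕ} [NeZero n] (π : Fin n → ℝ) (μ η lam : ℝ) : ℝ :=
  Finset.univ.sup' Finset.univ_nonempty (fun i => 1 - lam * (η * n * π i) * μ)

set_option maxHeartbeats 4000000 in
/-- Consensus error bound, Lemma `consensus-error`. One step of the
Projected Push-Pull update with averaging contraction `D(x⁺, φ') ≤ σ·D(z, φ)` gives
`D(x⁺, φ') ≤ 2λσ·q_π(η,1)·‖x − x*‖_φ + (σq_π(η,λ) + 2ηλσL√(n/min φ))·D(x, φ)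
+ 2ηλσ·S(y, π)`. -/
theorem consensus_error_bound {n d : ℕ} [NeZero n]
    (X : Set (EuclideanSpace ℝ (Fin d))) (hXne : X.Nonempty)
    (hXclosed : IsClosed X) (hXconvex : Convex ℝ X)
    (P : EuclideanSpace ℝ (Fin d) → EuclideanSpace ℝ (Fin d))
    (hPmem : ∀ v, P v ∈ X)
    (hPproj : ∀ v, ∀ u ∈ X, ‖v - P v‖ ≤ ‖v - u‖)
    (f : Fin n → EuclideanSpace ℝ (Fin d) → ℝ)
    (hfdiff : ∀ i, Differentiable ℝ (f i))
    (μ L : ℝ) (hμ : 0 < μ) (hμL : μ ≤ L)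
    (hstrong : ∀ i u v, μ * ‖u - v‖ ^ 2 ≤ ⟪gradient (f i) u - gradient (f i) v, u - v⟫)
    (hsmooth : ∀ i u v, ‖gradient (f i) u - gradient (f i) v‖ ≤ L * ‖u - v‖)
    (F : EuclideanSpace ℝ (Fin d) → ℝ)
    (hF : F = fun v => (1 / (n : ℝ)) * ∑ l, f l v)
    (xs : EuclideanSpace ℝ (Fin d)) (hxsmem : xs ∈ X)
    (hxsmin : ∀ u ∈ X, F xs ≤ F u)
    (hxsuniq : ∀ u ∈ X, (∀ v ∈ X, F u ≤ F v) → u = xs)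
    (φ φ' π : Fin n → ℝ)
    (hφpos : ∀ i, 0 < φ i) (hφsum : ∑ i, φ i = 1)
    (hφ'pos : ∀ i, 0 < φ' i) (hφ'sum : ∑ i, φ' i = 1)
    (hπpos : ∀ i, 0 < π i) (hπsum : ∑ i, π i = 1)
    (R : Fin n → Fin n → ℝ)
    (hRnonneg : ∀ i j, 0 ≤ R i j) (hRrow : ∀ i, ∑ j, R i j = 1)
    (hφR : ∀ j, ∑ i, φ' i * R i j = φ j)
    (η lam : ℝ) (hη0 : 0 < η) (hη : η < 1 / (n * L)) (hlam0 : 0 < lam) (hlam1 : lam ≤ 1)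
    (x y : Fin n → EuclideanSpace ℝ (Fin d))
    (htrack : ∑ l, y l = ∑ l, gradient (f l) (x l))
    (z xplus : Fin n → EuclideanSpace ℝ (Fin d))
    (hz : ∀ i, z i = (1 - lam) • x i + lam • P (x i - η • y i))
    (hxplus : ∀ i, xplus i = ∑ j, R i j • z j)
    (σ : ℝ) (hσ0 : 0 < σ) (hσ1 : σ < 1)
    (hcontr : Derr φ' xplus ≤ σ * Derr φ z) :
    Derr φ' xplus
      ≤ 2 * lam * σ * qmax π μ η 1 * Real.sqrt (∑ i, φ i * ‖x i - xs‖ ^ 2)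
        + (σ * qmax π μ η lam + 2 * η * lam * σ * L * Real.sqrt ((n : ℝ) / fmin φ)) * Derr φ x
        + 2 * η * lam * σ * Serr π y := by

  classical
  have hn0 : (0:ℝ) < n := by
    exact_mod_cast Nat.pos_of_ne_zero (NeZero.ne n)
  have hL0 : 0 < L := lt_of_lt_of_le hμ hμL
  have hηnL : η * ((n:ℝ) * L) < 1 := by
    have := (lt_div_iff₀ (show (0:ℝ) < (n:ℝ) * L by positivity)).mp hη
    simpa using this
  have hπle1 : ∀ i, π i ≤ 1 := by
    intro i
    rw [← hπsum]
    exact Finset.single_le_sum (f := π) (fun j _ => (hπpos j).le) (Finset.mem_univ i)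
  have hφle1 : ∀ i, φ i ≤ 1 := by
    intro i
    rw [← hφsum]
    exact Finset.single_le_sum (f := φ) (fun j _ => (hφpos j).le) (Finset.mem_univ i)
  have hbreg := fun l => breg (f l) (hfdiff l) μ L hμ.le hL0.le (hstrong l) (hsmooth l)
  have hscoco := fun l => strong_coco (f l) (hfdiff l) μ L hμ hμL (hstrong l) (hsmooth l)
  set Gs : EuclideanSpace ℝ (Fin d) := ∑ l, gradient (f l) xs with hGs
  -- variational inequality at xs
  have hVI : ∀ u ∈ X, 0 ≤ ⟪Gs, u - xs⟫ := by
    intro u hu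
    apply nonneg_of_forall_le_lin _ ((n:ℝ) * L * ‖u - xs‖^2 / 2) (by positivity)
    intro t ht0 ht1
    have hmem : xs + t • (u - xs) ∈ X := by
      have := hXconvex hxsmem hu (a := 1 - t) (b := t) (by linarith) ht0.le (by ring)
      convert this using 1
      module
    set b : EuclideanSpace ℝ (Fin d) := xs + t • (u - xs) with hb
    have hsub : b - xs = t • (u - xs) := by rw [hb]; abel
    have hsum : (∑ l, f l b) - (∑ l, f l xs) - ⟪Gs, t • (u - xs)⟫
        ≤ (n:ℝ) * (L / 2 * ‖t • (u - xs)‖^2) := by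
      have h1 := Finset.sum_le_sum (fun l (_ : l ∈ Finset.univ) => (hbreg l xs b).2)
      rw [hsub] at h1
      have e1 : ∑ l, (f l b - f l xs - ⟪gradient (f l) xs, t • (u - xs)⟫)
          = (∑ l, f l b) - (∑ l, f l xs) - ⟪Gs, t • (u - xs)⟫ := by
        rw [hGs, sum_inner]
        rw [Finset.sum_sub_distrib, Finset.sum_sub_distrib]
      have e2 : ∑ _l : Fin n, L / 2 * ‖t • (u - xs)‖^2 = (n:ℝ) * (L / 2 * ‖t • (u - xs)‖^2) := by
        rw [Finset.sum_const, Finset.card_univ, Fintype.card_fin, nsmul_eq_mul]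
      rw [e1, e2] at h1
      exact h1
    have hmin : (∑ l, f l xs) ≤ ∑ l, f l b := by
      have h2 := hxsmin b hmem
      rw [hF] at h2
      simp only at h2
      have := (mul_le_mul_iff_right₀ (show (0:ℝ) < 1 / n by positivity)).mp h2
      exact this
    have e3 : ⟪Gs, t • (u - xs)⟫ = t * ⟪Gs, u - xs⟫ := real_inner_smul_right _ _ _
    have e4 : ‖t • (u - xs)‖^2 = t^2 * ‖u - xs‖^2 := by
      rw [norm_smul, mul_pow, Real.norm_eq_abs, sq_abs]
    rw [e3, e4] at hsum
    nlinarith [hsum, hmin, ht0, mul_pos ht0 ht0]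
  -- obtuse angle property of the projection
  have hobt : ∀ v : EuclideanSpace ℝ (Fin d), ∀ u ∈ X, ⟪v - P v, u - P v⟫ ≤ 0 := by
    intro v u hu
    have key : ∀ t : ℝ, 0 < t → t ≤ 1 →
        2 * t * ⟪v - P v, u - P v⟫ ≤ t^2 * ‖u - P v‖^2 := by
      intro t ht0 ht1
      have hmem : P v + t • (u - P v) ∈ X := by
        have := hXconvex (hPmem v) hu (a := 1 - t) (b := t) (by linarith) ht0.le (by ring)
        convert this using 1
        module
      have hle := hPproj v _ hmem
      have hsq : ‖v - P v‖^2 ≤ ‖v - (P v + t • (u - P v))‖^2 :=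
        pow_le_pow_left₀ (norm_nonneg _) hle 2
      have e1 : v - (P v + t • (u - P v)) = (v - P v) - t • (u - P v) := by abel
      have e2 : ‖(v - P v) - t • (u - P v)‖^2
          = ‖v - P v‖^2 - 2*(t*⟪v - P v, u - P v⟫) + t^2*‖u - P v‖^2 := by
        rw [norm_sub_sq_real, real_inner_smul_right, norm_smul, mul_pow,
          Real.norm_eq_abs, sq_abs]
      rw [e1, e2] at hsq
      linarith
    have h0 : 0 ≤ -(2 * ⟪v - P v, u - P v⟫) := by
      apply nonneg_of_forall_le_lin _ (‖u - P v‖^2) (by positivity)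
      intro t ht0 ht1
      have := key t ht0 ht1
      nlinarith
    linarith
  -- per-agent projection bound
  have hpb : ∀ i, ‖P (x i - η • y i) - xs‖ ≤ ‖(x i - η • y i) - xs + (η * π i) • Gs‖ := by
    intro i
    set a : EuclideanSpace ℝ (Fin d) := x i - η • y i with ha
    have h1 : ⟪a - P a, xs - P a⟫ ≤ 0 := hobt a xs hxsmem
    have h2 : 0 ≤ ⟪Gs, P a - xs⟫ := hVI (P a) (hPmem a)
    have key : ‖P a - xs‖^2 ≤ ⟪a - xs + (η * π i) • Gs, P a - xs⟫ := by
      have e1 : a - xs + (η * π i) • Gs = (a - P a) + (P a - xs) + (η * π i) • Gs := by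
        module
      rw [e1, inner_add_left, inner_add_left, real_inner_smul_left,
        real_inner_self_eq_norm_sq]
      have e2 : ⟪a - P a, P a - xs⟫ = -⟪a - P a, xs - P a⟫ := by
        rw [← inner_neg_right]; congr 1; abel
      rw [e2]
      have h3 : 0 ≤ (η * π i) * ⟪Gs, P a - xs⟫ :=
        mul_nonneg (mul_nonneg hη0.le (hπpos i).le) h2
      linarith
    have hcs : ⟪a - xs + (η * π i) • Gs, P a - xs⟫
        ≤ ‖a - xs + (η * π i) • Gs‖ * ‖P a - xs‖ := real_inner_le_norm _ _
    rcases eq_or_lt_of_le (norm_nonneg (P a - xs)) with h | h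
    · rw [← h]
      exact norm_nonneg _
    · nlinarith [key, hcs, h]
  -- sums of gradients
  set Sg : EuclideanSpace ℝ (Fin d) := ∑ l, gradient (f l) (x l) with hSg
  have hSv : ∀ i : Fin n, (∑ l, (gradient (f l) (x i) - gradient (f l) xs))
      = (∑ l, gradient (f l) (x i)) - Gs := by
    intro i
    rw [Finset.sum_sub_distrib]
  -- per-agent gradient-step contraction
  have hfac : ∀ i : Fin n, 0 ≤ 1 - η * π i * (n:ℝ) * μ := by
    intro i
    have h1 : η * π i * (n:ℝ) * μ ≤ η * ((n:ℝ) * L) * π i := by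
      have : η * π i * (n:ℝ) * μ = (η * (n:ℝ) * μ) * π i := by ring
      rw [this]
      apply mul_le_mul_of_nonneg_right _ (hπpos i).le
      nlinarith [mul_le_mul_of_nonneg_left hμL (mul_nonneg hη0.le hn0.le)]
    nlinarith [hπle1 i, (hπpos i).le, mul_pos hn0 hL0, hηnL]
  have hstep : ∀ i : Fin n,
      ‖(x i - xs) - (η * π i) • ((∑ l, gradient (f l) (x i)) - Gs)‖
        ≤ (1 - η * π i * (n:ℝ) * μ) * ‖x i - xs‖ := by
    intro i
    rw [← hSv i]
    apply step_contract (η * π i) (n:ℝ) μ L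
      (∑ l, ‖gradient (f l) (x i) - gradient (f l) xs‖^2) _ _
      (mul_nonneg hη0.le (hπpos i).le) ?_ hn0.le ?_ ?_ ?_ (hfac i)
    · -- stepsize bound
      have hLμ : 0 < L + μ := by linarith
      have h1 : η * π i * (n:ℝ) * (L + μ) ≤ η * (n:ℝ) * (L + μ) := by
        have hh : 0 ≤ (η * (n:ℝ) * (L + μ)) * (1 - π i) :=
          mul_nonneg (mul_pos (mul_pos hη0 hn0) hLμ).le (by linarith [hπle1 i])
        nlinarith [hh]
      have h2 : (η * (n:ℝ)) * (L + μ) ≤ (η * (n:ℝ)) * (2 * L) :=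
        mul_le_mul_of_nonneg_left (by linarith) (mul_nonneg hη0.le hn0.le)
      nlinarith [hηnL]
    · -- strong cocoercivity summed
      have h1 := Finset.sum_le_sum (fun l (_ : l ∈ Finset.univ) => hscoco l xs (x i))
      rw [Finset.sum_add_distrib, Finset.sum_const, Finset.card_univ, Fintype.card_fin,
        nsmul_eq_mul, ← Finset.mul_sum, ← sum_inner] at h1
      calc (∑ l, ‖gradient (f l) (x i) - gradient (f l) xs‖^2) + (n:ℝ) * μ * L * ‖x i - xs‖^2
          = (∑ l, ‖gradient (f l) (x i) - gradient (f l) xs‖^2)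
            + (n:ℝ) * (μ * L * ‖x i - xs‖^2) := by ring
        _ ≤ _ := h1
    · -- norm of sum squared
      have h1 : ‖∑ l, (gradient (f l) (x i) - gradient (f l) xs)‖
          ≤ ∑ l, ‖gradient (f l) (x i) - gradient (f l) xs‖ :=
        norm_sum_le _ _
      have h2 : ‖∑ l, (gradient (f l) (x i) - gradient (f l) xs)‖^2
          ≤ (∑ l, ‖gradient (f l) (x i) - gradient (f l) xs‖)^2 :=
        pow_le_pow_left₀ (norm_nonneg _) h1 2
      have h3 := sq_sum_le_card_mul_sum_sq
        (s := Finset.univ) (f := fun l => ‖gradient (f l) (x i) - gradient (f l) xs‖)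
      rw [Finset.card_univ, Fintype.card_fin] at h3
      calc ‖∑ l, (gradient (f l) (x i) - gradient (f l) xs)‖^2
          ≤ (∑ l, ‖gradient (f l) (x i) - gradient (f l) xs‖)^2 := h2
        _ ≤ (n:ℝ) * ∑ l, ‖gradient (f l) (x i) - gradient (f l) xs‖^2 := by
            exact_mod_cast h3
    · -- strong monotonicity summed
      have h1 := Finset.sum_le_sum (fun l (_ : l ∈ Finset.univ) => hstrong l (x i) xs)
      rw [Finset.sum_const, Finset.card_univ, Fintype.card_fin, nsmul_eq_mul,
        ← sum_inner] at h1
      calc (n:ℝ) * μ * ‖x i - xs‖^2 = (n:ℝ) * (μ * ‖x i - xs‖^2) := by ring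
        _ ≤ _ := h1
  -- tracking error vectors
  set ev : Fin n → EuclideanSpace ℝ (Fin d) := fun i => (π i)⁻¹ • y i - (∑ l, y l) with hev
  have hyd : ∀ i, η • y i = (η * π i) • ev i + (η * π i) • Sg := by
    intro i
    have h1 : π i • ev i = y i - π i • Sg := by
      rw [hev]
      simp only []
      rw [smul_sub, smul_smul, mul_inv_cancel₀ (hπpos i).ne', one_smul, htrack, hSg]
    have h2 : y i = π i • ev i + π i • Sg := by
      rw [h1]; abel
    calc η • y i = η • (π i • ev i + π i • Sg) := by rw [← h2]
      _ = (η * π i) • ev i + (η * π i) • Sg := by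
          rw [smul_add, smul_smul, smul_smul]
  -- per-agent full bound
  have hper : ∀ i, ‖P (x i - η • y i) - xs‖
      ≤ (1 - η * π i * (n:ℝ) * μ) * ‖x i - xs‖
        + η * π i * (L * ∑ l, ‖x l - x i‖) + η * π i * ‖ev i‖ := by
    intro i
    refine le_trans (hpb i) ?_
    have hdec : (x i - η • y i) - xs + (η * π i) • Gs
        = ((x i - xs) - (η * π i) • ((∑ l, gradient (f l) (x i)) - Gs))
          - (η * π i) • (Sg - (∑ l, gradient (f l) (x i))) - (η * π i) • ev i := by
      rw [hyd i]; module
    rw [hdec]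
    have hT : ‖Sg - (∑ l, gradient (f l) (x i))‖ ≤ L * ∑ l, ‖x l - x i‖ := by
      have e1 : Sg - (∑ l, gradient (f l) (x i))
          = ∑ l, (gradient (f l) (x l) - gradient (f l) (x i)) := by
        rw [Finset.sum_sub_distrib, hSg]
      rw [e1]
      refine le_trans (norm_sum_le _ _) ?_
      rw [Finset.mul_sum]
      exact Finset.sum_le_sum (fun l _ => hsmooth l (x l) (x i))
    have hηπ : 0 ≤ η * π i := mul_nonneg hη0.le (hπpos i).le
    calc ‖(((x i - xs) - (η * π i) • ((∑ l, gradient (f l) (x i)) - Gs))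
          - (η * π i) • (Sg - (∑ l, gradient (f l) (x i)))) - (η * π i) • ev i‖
        ≤ ‖((x i - xs) - (η * π i) • ((∑ l, gradient (f l) (x i)) - Gs))
            - (η * π i) • (Sg - (∑ l, gradient (f l) (x i)))‖ + ‖(η * π i) • ev i‖ :=
          norm_sub_le _ _
      _ ≤ ‖(x i - xs) - (η * π i) • ((∑ l, gradient (f l) (x i)) - Gs)‖
            + ‖(η * π i) • (Sg - (∑ l, gradient (f l) (x i)))‖ + ‖(η * π i) • ev i‖ := by
          have := norm_sub_le ((x i - xs) - (η * π i) • ((∑ l, gradient (f l) (x i)) - Gs))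
            ((η * π i) • (Sg - (∑ l, gradient (f l) (x i))))
          linarith
      _ ≤ (1 - η * π i * (n:ℝ) * μ) * ‖x i - xs‖
            + η * π i * (L * ∑ l, ‖x l - x i‖) + η * π i * ‖ev i‖ := by
          have n1 := hstep i
          have n2 : ‖(η * π i) • (Sg - (∑ l, gradient (f l) (x i)))‖
              ≤ η * π i * (L * ∑ l, ‖x l - x i‖) := by
            rw [norm_smul, Real.norm_eq_abs, abs_of_nonneg hηπ]
            exact mul_le_mul_of_nonneg_left hT hηπ
          have n3 : ‖(η * π i) • ev i‖ = η * π i * ‖ev i‖ := by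
            rw [norm_smul, Real.norm_eq_abs, abs_of_nonneg hηπ]
          linarith
  -- index with positive entry
  have i0 : Fin n := ⟨0, Nat.pos_of_ne_zero (NeZero.ne n)⟩
  have hfmin_pos : 0 < fmin φ := by
    obtain ⟨j, _, hj⟩ := Finset.exists_mem_eq_inf' (Finset.univ_nonempty) φ
    unfold fmin
    rw [hj]
    exact hφpos j
  have hfmin_le : ∀ l, fmin φ ≤ φ l := fun l => Finset.inf'_le _ (Finset.mem_univ l)
  have hq1ge : ∀ i, 1 - η * π i * (n:ℝ) * μ ≤ qmax π μ η 1 := by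
    intro i
    have h := Finset.le_sup' (fun j : Fin n => 1 - 1 * (η * (n:ℝ) * π j) * μ)
      (Finset.mem_univ i)
    calc 1 - η * π i * (n:ℝ) * μ = 1 - 1 * (η * (n:ℝ) * π i) * μ := by ring
      _ ≤ _ := h
  have hq10 : 0 ≤ qmax π μ η 1 := le_trans (hfac i0) (hq1ge i0)
  have hqlam : 1 - lam ≤ qmax π μ η lam := by
    have h := Finset.le_sup' (fun j : Fin n => 1 - lam * (η * (n:ℝ) * π j) * μ)
      (Finset.mem_univ i0)
    have h2 : 1 - lam ≤ 1 - lam * (η * (n:ℝ) * π i0) * μ := by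
      have h3 := hfac i0
      have hnn : 0 ≤ η * (n:ℝ) * π i0 * μ := by
        have := (hπpos i0).le
        positivity
      nlinarith [hlam0.le]
    exact le_trans h2 h
  -- aggregated per-agent bound
  have hPX : Real.sqrt (∑ i, φ i * ‖P (x i - η • y i) - xs‖ ^ 2)
      ≤ qmax π μ η 1 * Real.sqrt (∑ i, φ i * ‖x i - xs‖ ^ 2)
        + (η * L * Real.sqrt ((n:ℝ) / fmin φ)) * Derr φ x + η * Serr π y := by
    refine le_trans (mink3 φ
      (fun i => (1 - η * π i * (n:ℝ) * μ) * ‖x i - xs‖)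
      (fun i => η * π i * (L * ∑ l, ‖x l - x i‖))
      (fun i => η * π i * ‖ev i‖)
      (fun i => ‖P (x i - η • y i) - xs‖)
      (fun i => (hφpos i).le) (fun i => norm_nonneg _) hper) ?_
    have hA : Real.sqrt (∑ i, φ i * ((1 - η * π i * (n:ℝ) * μ) * ‖x i - xs‖) ^ 2)
        ≤ qmax π μ η 1 * Real.sqrt (∑ i, φ i * ‖x i - xs‖ ^ 2) := by
      apply sqrt_sum_le_const_mul _ _ _ hq10
      rw [Finset.mul_sum]
      apply Finset.sum_le_sum
      intro i _
      have h0 := hfac i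
      have h1 := hq1ge i
      have h2 : (1 - η * π i * (n:ℝ) * μ) ^ 2 ≤ (qmax π μ η 1) ^ 2 := by nlinarith
      calc φ i * ((1 - η * π i * (n:ℝ) * μ) * ‖x i - xs‖) ^ 2
          = (1 - η * π i * (n:ℝ) * μ) ^ 2 * (φ i * ‖x i - xs‖ ^ 2) := by ring
        _ ≤ (qmax π μ η 1) ^ 2 * (φ i * ‖x i - xs‖ ^ 2) := by
            apply mul_le_mul_of_nonneg_right h2
            have := (hφpos i).le
            positivity
    have hB : Real.sqrt (∑ i, φ i * (η * π i * (L * ∑ l, ‖x l - x i‖)) ^ 2)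
        ≤ (η * L * Real.sqrt ((n:ℝ) / fmin φ)) * Derr φ x := by
      show Real.sqrt (∑ i, φ i * (η * π i * (L * ∑ l, ‖x l - x i‖)) ^ 2)
        ≤ (η * L * Real.sqrt ((n:ℝ) / fmin φ))
          * Real.sqrt (∑ i, ∑ j, φ i * φ j * ‖x i - x j‖ ^ 2)
      apply sqrt_sum_le_const_mul _ _ _ (by positivity)
      have e1 : (η * L * Real.sqrt ((n:ℝ) / fmin φ)) ^ 2
          = η ^ 2 * L ^ 2 * ((n:ℝ) / fmin φ) := by
        rw [mul_pow, mul_pow, Real.sq_sqrt (by positivity)]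
      rw [e1]
      have step1 : ∀ i : Fin n, φ i * (η * π i * (L * ∑ l, ‖x l - x i‖)) ^ 2
          ≤ η ^ 2 * L ^ 2 * ((n:ℝ) * ∑ l, φ i * ‖x l - x i‖ ^ 2) := by
        intro i
        have hsq := sq_sum_le_card_mul_sum_sq (s := Finset.univ)
          (f := fun l => ‖x l - x i‖)
        rw [Finset.card_univ, Fintype.card_fin] at hsq
        have hsq' : (∑ l, ‖x l - x i‖) ^ 2 ≤ (n:ℝ) * ∑ l, ‖x l - x i‖ ^ 2 := by
          exact_mod_cast hsq
        have hπ2 : π i ^ 2 ≤ 1 := by nlinarith [hπle1 i, (hπpos i).le]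
        have hms : ∑ l, φ i * ‖x l - x i‖ ^ 2 = φ i * ∑ l, ‖x l - x i‖ ^ 2 := by
          rw [Finset.mul_sum]
        rw [hms]
        have key1 : φ i * (π i ^ 2 * (∑ l, ‖x l - x i‖) ^ 2)
            ≤ φ i * (1 * ((n:ℝ) * ∑ l, ‖x l - x i‖ ^ 2)) := by
          apply mul_le_mul_of_nonneg_left _ (hφpos i).le
          have hnn : 0 ≤ (∑ l, ‖x l - x i‖) ^ 2 := sq_nonneg _
          nlinarith [hsq', hπ2, sq_nonneg (π i)]
        nlinarith [key1, sq_nonneg η, sq_nonneg L,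
          mul_nonneg (sq_nonneg η) (sq_nonneg L)]
      have step2 : ∑ i, φ i * (η * π i * (L * ∑ l, ‖x l - x i‖)) ^ 2
          ≤ η ^ 2 * L ^ 2 * ((n:ℝ) * ∑ i, ∑ l, φ i * ‖x l - x i‖ ^ 2) := by
        calc ∑ i, φ i * (η * π i * (L * ∑ l, ‖x l - x i‖)) ^ 2
            ≤ ∑ i, η ^ 2 * L ^ 2 * ((n:ℝ) * ∑ l, φ i * ‖x l - x i‖ ^ 2) :=
              Finset.sum_le_sum (fun i _ => step1 i)
          _ = η ^ 2 * L ^ 2 * ((n:ℝ) * ∑ i, ∑ l, φ i * ‖x l - x i‖ ^ 2) := by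
              rw [← Finset.mul_sum, ← Finset.mul_sum]
      have step3 : ∑ i, ∑ l, φ i * ‖x l - x i‖ ^ 2
          ≤ (fmin φ)⁻¹ * ∑ i, ∑ j, φ i * φ j * ‖x i - x j‖ ^ 2 := by
        rw [Finset.mul_sum]
        apply Finset.sum_le_sum
        intro i _
        rw [Finset.mul_sum]
        apply Finset.sum_le_sum
        intro l _
        have h5 : 1 ≤ (fmin φ)⁻¹ * φ l := by
          rw [← inv_mul_cancel₀ (ne_of_gt hfmin_pos)]
          exact mul_le_mul_of_nonneg_left (hfmin_le l) (by positivity)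
        have h6 : ‖x l - x i‖ = ‖x i - x l‖ := norm_sub_rev _ _
        rw [h6]
        calc φ i * ‖x i - x l‖ ^ 2 = 1 * (φ i * ‖x i - x l‖ ^ 2) := by ring
          _ ≤ ((fmin φ)⁻¹ * φ l) * (φ i * ‖x i - x l‖ ^ 2) := by
              apply mul_le_mul_of_nonneg_right h5
              have := (hφpos i).le
              positivity
          _ = (fmin φ)⁻¹ * (φ i * φ l * ‖x i - x l‖ ^ 2) := by ring
      calc ∑ i, φ i * (η * π i * (L * ∑ l, ‖x l - x i‖)) ^ 2
          ≤ η ^ 2 * L ^ 2 * ((n:ℝ) * ∑ i, ∑ l, φ i * ‖x l - x i‖ ^ 2) := step2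
        _ ≤ η ^ 2 * L ^ 2 * ((n:ℝ) * ((fmin φ)⁻¹ * ∑ i, ∑ j, φ i * φ j * ‖x i - x j‖ ^ 2)) := by
            apply mul_le_mul_of_nonneg_left _ (by positivity)
            apply mul_le_mul_of_nonneg_left step3 hn0.le
        _ = η ^ 2 * L ^ 2 * ((n:ℝ) / fmin φ) * (∑ i, ∑ j, φ i * φ j * ‖x i - x j‖ ^ 2) := by
            rw [div_eq_mul_inv]; ring
    have hC : Real.sqrt (∑ i, φ i * (η * π i * ‖ev i‖) ^ 2) ≤ η * Serr π y := by
      show Real.sqrt (∑ i, φ i * (η * π i * ‖ev i‖) ^ 2)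
        ≤ η * Real.sqrt (∑ i, π i * ‖(π i)⁻¹ • y i - (∑ l, y l)‖ ^ 2)
      apply sqrt_sum_le_const_mul _ _ _ hη0.le
      rw [Finset.mul_sum]
      apply Finset.sum_le_sum
      intro i _
      have h7 : ‖ev i‖ = ‖(π i)⁻¹ • y i - (∑ l, y l)‖ := by rw [hev]
      rw [h7]
      have h8 : φ i * π i ^ 2 ≤ π i := by
        nlinarith [(hφpos i).le, hφle1 i, (hπpos i).le, hπle1 i]
      calc φ i * (η * π i * ‖(π i)⁻¹ • y i - (∑ l, y l)‖) ^ 2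
          = η ^ 2 * ((φ i * π i ^ 2) * ‖(π i)⁻¹ • y i - (∑ l, y l)‖ ^ 2) := by ring
        _ ≤ η ^ 2 * (π i * ‖(π i)⁻¹ • y i - (∑ l, y l)‖ ^ 2) := by
            apply mul_le_mul_of_nonneg_left _ (sq_nonneg η)
            exact mul_le_mul_of_nonneg_right h8 (sq_nonneg _)
    exact add_le_add (add_le_add hA hB) hC
  -- consensus error of z
  have hprod : ∀ (u w : Fin n → EuclideanSpace ℝ (Fin d)),
      (∑ i, ∑ j, φ i * φ j * ‖u i - w j‖ ^ 2)
        = ∑ p : Fin n × Fin n, (φ p.1 * φ p.2) * ‖u p.1 - w p.2‖ ^ 2 := by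
    intro u w
    rw [Fintype.sum_prod_type]
  have hDz : Derr φ z ≤ (1 - lam) * Derr φ x
      + lam * (2 * Real.sqrt (∑ i, φ i * ‖P (x i - η • y i) - xs‖ ^ 2)) := by
    have hDzr : Derr φ z
        = Real.sqrt (∑ p : Fin n × Fin n, (φ p.1 * φ p.2) * ‖z p.1 - z p.2‖ ^ 2) := by
      show Real.sqrt (∑ i, ∑ j, φ i * φ j * ‖z i - z j‖ ^ 2) = _
      rw [hprod]
    have hDxr : Derr φ x
        = Real.sqrt (∑ p : Fin n × Fin n, (φ p.1 * φ p.2) * ‖x p.1 - x p.2‖ ^ 2) := by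
      show Real.sqrt (∑ i, ∑ j, φ i * φ j * ‖x i - x j‖ ^ 2) = _
      rw [hprod]
    rw [hDzr]
    have hb2 : ∀ p : Fin n × Fin n, ‖z p.1 - z p.2‖
        ≤ (1 - lam) * ‖x p.1 - x p.2‖
          + lam * ‖P (x p.1 - η • y p.1) - P (x p.2 - η • y p.2)‖ := by
      intro p
      have e : z p.1 - z p.2 = (1 - lam) • (x p.1 - x p.2)
          + lam • (P (x p.1 - η • y p.1) - P (x p.2 - η • y p.2)) := by
        rw [hz p.1, hz p.2]; module
      rw [e]
      refine le_trans (norm_add_le _ _) ?_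
      rw [norm_smul, norm_smul, Real.norm_eq_abs, Real.norm_eq_abs,
        abs_of_nonneg (by linarith : (0:ℝ) ≤ 1 - lam), abs_of_nonneg hlam0.le]
    have hm2 := mink2 (fun p : Fin n × Fin n => φ p.1 * φ p.2)
      (fun p => (1 - lam) * ‖x p.1 - x p.2‖)
      (fun p => lam * ‖P (x p.1 - η • y p.1) - P (x p.2 - η • y p.2)‖)
      (fun p => ‖z p.1 - z p.2‖)
      (fun p => mul_nonneg (hφpos _).le (hφpos _).le)
      (fun p => norm_nonneg _) hb2
    refine le_trans hm2 (add_le_add ?_ ?_)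
    · rw [hDxr]
      apply sqrt_sum_le_const_mul _ _ _ (by linarith : (0:ℝ) ≤ 1 - lam)
      rw [Finset.mul_sum]
      apply le_of_eq
      apply Finset.sum_congr rfl
      intro p _
      ring
    · have hDP : Real.sqrt (∑ p : Fin n × Fin n,
          (φ p.1 * φ p.2) * ‖P (x p.1 - η • y p.1) - P (x p.2 - η • y p.2)‖ ^ 2)
          ≤ 2 * Real.sqrt (∑ i, φ i * ‖P (x i - η • y i) - xs‖ ^ 2) := by
        have hm3 := mink2 (fun p : Fin n × Fin n => φ p.1 * φ p.2)
          (fun p => ‖P (x p.1 - η • y p.1) - xs‖)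
          (fun p => ‖P (x p.2 - η • y p.2) - xs‖)
          (fun p => ‖P (x p.1 - η • y p.1) - P (x p.2 - η • y p.2)‖)
          (fun p => mul_nonneg (hφpos _).le (hφpos _).le)
          (fun p => norm_nonneg _)
          (fun p => by
            show ‖P (x p.1 - η • y p.1) - P (x p.2 - η • y p.2)‖
              ≤ ‖P (x p.1 - η • y p.1) - xs‖ + ‖P (x p.2 - η • y p.2) - xs‖
            have e : P (x p.1 - η • y p.1) - P (x p.2 - η • y p.2)
                = (P (x p.1 - η • y p.1) - xs) - (P (x p.2 - η • y p.2) - xs) := by abel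
            rw [e]
            exact norm_sub_le _ _)
        refine le_trans hm3 ?_
        have eA : ∑ p : Fin n × Fin n, (φ p.1 * φ p.2) * ‖P (x p.1 - η • y p.1) - xs‖ ^ 2
            = ∑ i, φ i * ‖P (x i - η • y i) - xs‖ ^ 2 := by
          rw [Fintype.sum_prod_type]
          apply Finset.sum_congr rfl
          intro i _
          calc ∑ j, (φ i * φ j) * ‖P (x i - η • y i) - xs‖ ^ 2
              = ∑ j, (φ i * ‖P (x i - η • y i) - xs‖ ^ 2) * φ j := by
                apply Finset.sum_congr rfl; intro j _; ring
            _ = (φ i * ‖P (x i - η • y i) - xs‖ ^ 2) * ∑ j, φ j := by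
                rw [Finset.mul_sum]
            _ = φ i * ‖P (x i - η • y i) - xs‖ ^ 2 := by rw [hφsum, mul_one]
        have eB : ∑ p : Fin n × Fin n, (φ p.1 * φ p.2) * ‖P (x p.2 - η • y p.2) - xs‖ ^ 2
            = ∑ i, φ i * ‖P (x i - η • y i) - xs‖ ^ 2 := by
          rw [Fintype.sum_prod_type]
          rw [Finset.sum_comm]
          apply Finset.sum_congr rfl
          intro j _
          calc ∑ i, (φ i * φ j) * ‖P (x j - η • y j) - xs‖ ^ 2
              = ∑ i, (φ j * ‖P (x j - η • y j) - xs‖ ^ 2) * φ i := by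
                apply Finset.sum_congr rfl; intro i _; ring
            _ = (φ j * ‖P (x j - η • y j) - xs‖ ^ 2) * ∑ i, φ i := by
                rw [Finset.mul_sum]
            _ = φ j * ‖P (x j - η • y j) - xs‖ ^ 2 := by rw [hφsum, mul_one]
        rw [eA, eB]
        linarith [Real.sqrt_nonneg (∑ i, φ i * ‖P (x i - η • y i) - xs‖ ^ 2)]
      calc Real.sqrt (∑ p : Fin n × Fin n, (φ p.1 * φ p.2)
            * (lam * ‖P (x p.1 - η • y p.1) - P (x p.2 - η • y p.2)‖) ^ 2)
          ≤ lam * Real.sqrt (∑ p : Fin n × Fin n,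
              (φ p.1 * φ p.2) * ‖P (x p.1 - η • y p.1) - P (x p.2 - η • y p.2)‖ ^ 2) := by
            apply sqrt_sum_le_const_mul _ _ _ hlam0.le
            rw [Finset.mul_sum]
            apply le_of_eq
            apply Finset.sum_congr rfl
            intro p _
            ring
        _ ≤ lam * (2 * Real.sqrt (∑ i, φ i * ‖P (x i - η • y i) - xs‖ ^ 2)) := by
            apply mul_le_mul_of_nonneg_left hDP hlam0.le
  -- final assembly
  have hDx0 : 0 ≤ Derr φ x := Real.sqrt_nonneg _
  have c3 : Derr φ z ≤ (1 - lam) * Derr φ x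
      + lam * (2 * (qmax π μ η 1 * Real.sqrt (∑ i, φ i * ‖x i - xs‖ ^ 2)
        + (η * L * Real.sqrt ((n:ℝ) / fmin φ)) * Derr φ x + η * Serr π y)) := by
    refine le_trans hDz ?_
    have h9 : lam * (2 * Real.sqrt (∑ i, φ i * ‖P (x i - η • y i) - xs‖ ^ 2))
        ≤ lam * (2 * (qmax π μ η 1 * Real.sqrt (∑ i, φ i * ‖x i - xs‖ ^ 2)
          + (η * L * Real.sqrt ((n:ℝ) / fmin φ)) * Derr φ x + η * Serr π y)) := by
      apply mul_le_mul_of_nonneg_left _ hlam0.le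
      linarith [hPX]
    linarith
  have c4 : σ * Derr φ z ≤ σ * ((1 - lam) * Derr φ x
      + lam * (2 * (qmax π μ η 1 * Real.sqrt (∑ i, φ i * ‖x i - xs‖ ^ 2)
        + (η * L * Real.sqrt ((n:ℝ) / fmin φ)) * Derr φ x + η * Serr π y))) :=
    mul_le_mul_of_nonneg_left c3 hσ0.le
  have c6 : σ * ((1 - lam) * Derr φ x) ≤ σ * (qmax π μ η lam * Derr φ x) :=
    mul_le_mul_of_nonneg_left (mul_le_mul_of_nonneg_right hqlam hDx0) hσ0.le
  have c7 := le_trans hcontr c4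
  nlinarith [c7, c6]
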